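/- Let m, n, k be natural numbers with m ≥ 1, n ≥ 1, k ≥ 1, regarded as real numbers. Define p_a = √(m/(m + k − 1)) and p_b = √(n/(n + k − 1)). Then (p_a − p_b)² ≤ |m − n| / k. In particular, the discrepancy term (p_a − p_b)² appearing in the Wasserstein-approximation error bound of the paper's Theorem 2 decreases at rate O(1/k) as the size k of the global shared measure increases. -/

import Mathlib

/-- For natural numbers `m, n, k ≥ 1`, with `p_a = √(m/(m+k−1))` and
`p_b = √(n/(n+k−1))`, we have `(p_a − p_b)² ≤ |m − n| / k`. -/
theorem weight_discrepancy_rate (m n k : ℕ) (hm : 1 ≤ m) (hn : 1 ≤ n) (hk : 1 ≤ k) :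
    (Real.sqrt ((m : ℝ) / ((m : ℝ) + (k : ℝ) - 1))
      - Real.sqrt ((n : ℝ) / ((n : ℝ) + (k : ℝ) - 1))) ^ 2
      ≤ |(m : ℝ) - (n : ℝ)| / (k : ℝ) := by
  have hM : (1 : ℝ) ≤ m := by exact_mod_cast hm
  have hN : (1 : ℝ) ≤ n := by exact_mod_cast hn
  have hK : (1 : ℝ) ≤ k := by exact_mod_cast hk
  set M := (m : ℝ); set N := (n : ℝ); set K := (k : ℝ)
  have hD1 : (0 : ℝ) < M + K - 1 := by linarith
  have hD2 : (0 : ℝ) < N + K - 1 := by linarith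
  set a := M / (M + K - 1) with ha
  set b := N / (N + K - 1) with hb
  have ha0 : 0 ≤ a := div_nonneg (by linarith) hD1.le
  have hb0 : 0 ≤ b := div_nonneg (by linarith) hD2.le
  have hx := Real.sq_sqrt ha0
  have hy := Real.sq_sqrt hb0
  set x := Real.sqrt a
  set y := Real.sqrt b
  have hx0 : 0 ≤ x := Real.sqrt_nonneg _
  have hy0 : 0 ≤ y := Real.sqrt_nonneg _
  -- Step 1: (x - y)^2 ≤ |a - b|
  have h1 : (x - y) ^ 2 ≤ |a - b| := by
    have habs : |x - y| ≤ x + y := by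
      rcases abs_cases (x - y) with ⟨h, _⟩ | ⟨h, _⟩ <;> rw [h] <;> linarith
    have : (x - y) ^ 2 = |x - y| * |x - y| := by
      rw [abs_mul_abs_self]; ring
    rw [this]
    have h2 : |x - y| * |x - y| ≤ |x - y| * (x + y) :=
      mul_le_mul_of_nonneg_left habs (abs_nonneg _)
    have h3 : |x - y| * (x + y) = |a - b| := by
      have : |x - y| * (x + y) = |(x - y) * (x + y)| := by
        rw [abs_mul, abs_of_nonneg (by linarith : (0:ℝ) ≤ x + y)]
      rw [this]
      congr 1
      nlinarith [hx, hy]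
    linarith [h3 ▸ h2]
  -- Step 2: |a - b| ≤ |M - N| / K
  have h2 : |a - b| ≤ |M - N| / K := by
    have hab : a - b = ((M - N) * (K - 1)) / ((M + K - 1) * (N + K - 1)) := by
      rw [ha, hb, div_sub_div _ _ hD1.ne' hD2.ne']; congr 1; ring
    rw [hab, abs_div, abs_mul, abs_of_nonneg (by linarith : (0:ℝ) ≤ K - 1),
      abs_of_pos (mul_pos hD1 hD2)]
    rw [div_le_div_iff₀ (mul_pos hD1 hD2) (by linarith : (0:ℝ) < K)]
    have hMN : 0 ≤ |M - N| := abs_nonneg _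
    nlinarith [mul_nonneg hMN (by nlinarith : (0:ℝ) ≤ (M + K - 1) * (N + K - 1) - (K - 1) * K)]
  linarith
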